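/- Density theorem for conditional measures: let (X,𝓑,m) be a standard Borel probability space (a Lebesgue space), η a measurable partition of X with Rohlin conditional measures {m_x^η}, and π : X → ℝ^d a Borel measurable map. Then for every A ∈ 𝓑 and for m-a.e. x ∈ X, lim_{r→0} m_x^η(B^π(x,r) ∩ A)/m_x^η(B^π(x,r)) = E_m(1_A | η̂ ∨ π^{-1}𝓑(ℝ^d))(x), where η̂ is the σ-algebra of η-saturated measurable sets and η̂ ∨ π^{-1}𝓑(ℝ^d) is the σ-algebra generated by η̂ together with π^{-1}𝓑(ℝ^d). -/

import Mathlib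

open MeasureTheory Filter Set Metric Function Topology ProbabilityTheory
open scoped NNReal ENNReal

noncomputable section

lemma comap_meas_eq_aux {X Z W : Type*} [MeasurableSpace Z] [MeasurableSpace W]
    [MeasurableSingletonClass W] {p : X → Z} {g : X → W}
    (hg : Measurable[MeasurableSpace.comap p inferInstance] g)
    {x y : X} (h : p y = p x) : g y = g x := by
  obtain ⟨t, _, hpt⟩ := hg (measurableSet_singleton (g x))
  have hx : x ∈ p ⁻¹' t := by rw [hpt]; exact rfl
  have hy : y ∈ p ⁻¹' t := by simpa [Set.mem_preimage, h] using hx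
  rw [hpt] at hy
  exact hy

lemma kernel_ball_meas_aux {W X E : Type*} [MeasurableSpace W] [MeasurableSpace X]
    [MeasurableSpace E] [PseudoMetricSpace E] [OpensMeasurableSpace E] [SecondCountableTopology E]
    (κ : Kernel W X) [IsSFiniteKernel κ]
    (π : X → E) (hπ : Measurable π) (e : W → E) (he : Measurable e)
    (B : Set X) (hB : MeasurableSet B) (q : ℝ) :
    Measurable (fun w => κ w (π ⁻¹' Metric.closedBall (e w) q ∩ B)) := by
  have ht : MeasurableSet {wx : W × X | dist (π wx.2) (e wx.1) ≤ q ∧ wx.2 ∈ B} := by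
    refine MeasurableSet.inter ?_ (measurable_snd hB)
    exact measurableSet_le ((hπ.comp measurable_snd).dist (he.comp measurable_fst))
      measurable_const
  have h := Kernel.measurable_kernel_prodMk_left (κ := κ) ht
  have hset : ∀ w, (Prod.mk w ⁻¹' {wx : W × X | dist (π wx.2) (e wx.1) ≤ q ∧ wx.2 ∈ B})
      = π ⁻¹' Metric.closedBall (e w) q ∩ B := by
    intro w
    ext y
    simp [Metric.mem_closedBall]
  simp only [hset] at h
  exact h

lemma fiber_besicovitch_aux {X : Type*} [MeasurableSpace X] {d : ℕ}
    (π : X → EuclideanSpace ℝ (Fin d)) (hπ : Measurable π)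
    (ν : Measure X) [IsFiniteMeasure ν] (A : Set X) (hA : MeasurableSet A) :
    ∀ᵐ y ∂ν,
      Tendsto (fun r : ℝ =>
          ν (π ⁻¹' closedBall (π y) r ∩ A) / ν (π ⁻¹' closedBall (π y) r))
        (𝓝[>] 0) (𝓝 ((((ν.restrict A).map π).rnDeriv (ν.map π)) (π y)))
      ∧ (((ν.restrict A).map π).rnDeriv (ν.map π)) (π y) ≠ ∞ := by
  set lm := ν.map π with hlm
  set rm := (ν.restrict A).map π with hrm
  have h1 := Besicovitch.ae_tendsto_rnDeriv rm lm
  have h2 := Measure.rnDeriv_lt_top rm lm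
  have h := ae_of_ae_map (hπ.aemeasurable (μ := ν)) (h1.and h2)
  filter_upwards [h] with y hy
  refine ⟨?_, hy.2.ne⟩
  have heq : ∀ r : ℝ, rm (closedBall (π y) r) / lm (closedBall (π y) r)
      = ν (π ⁻¹' closedBall (π y) r ∩ A) / ν (π ⁻¹' closedBall (π y) r) := by
    intro r
    rw [hrm, hlm, Measure.map_apply hπ measurableSet_closedBall,
      Measure.map_apply hπ measurableSet_closedBall, Measure.restrict_apply' hA]
  exact hy.1.congr heq

lemma fiber_lintegral_aux {X : Type*} [MeasurableSpace X] {d : ℕ}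
    (π : X → EuclideanSpace ℝ (Fin d)) (hπ : Measurable π)
    (ν : Measure X) [IsFiniteMeasure ν] (A : Set X) (hA : MeasurableSet A)
    (F : X → ℝ≥0∞)
    (hF : ∀ᵐ y ∂ν, F y = (((ν.restrict A).map π).rnDeriv (ν.map π)) (π y))
    (T : Set (EuclideanSpace ℝ (Fin d))) (hT : MeasurableSet T) :
    ∫⁻ y in π ⁻¹' T, F y ∂ν = ν (π ⁻¹' T ∩ A) := by
  set lm := ν.map π with hlm
  set rm := (ν.restrict A).map π with hrm
  have hac : rm ≪ lm := by
    refine Measure.absolutelyContinuous_of_le ?_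
    exact Measure.map_mono Measure.restrict_le_self hπ
  calc ∫⁻ y in π ⁻¹' T, F y ∂ν
      = ∫⁻ y in π ⁻¹' T, (rm.rnDeriv lm) (π y) ∂ν :=
        lintegral_congr_ae (ae_restrict_of_ae hF)
    _ = ∫⁻ z in T, rm.rnDeriv lm z ∂lm := by
        rw [hlm, setLIntegral_map hT (Measure.measurable_rnDeriv _ _) hπ]
    _ = rm T := Measure.setLIntegral_rnDeriv hac T
    _ = ν (π ⁻¹' T ∩ A) := by
        rw [hrm, Measure.map_apply hπ hT, Measure.restrict_apply' hA]

/-- Density theorem for conditional measures: if `{μc x}` is Rohlin's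
system of conditional measures of `m` given the measurable partition `η` into the fibers
of a measurable map `p : X → Z`, and `π : X → ℝ^d` is Borel, then for every measurable
`A` and `m`-a.e. `x`,
`lim_{r→0} μc x(B^π(x,r) ∩ A)/μc x(B^π(x,r)) = E_m(1_A | η̂ ∨ π⁻¹𝓑(ℝ^d))(x)`. -/
theorem density_conditional_measures
    {X Z : Type*} [MeasurableSpace X] [StandardBorelSpace X]
    [MeasurableSpace Z] [StandardBorelSpace Z]
    (m : Measure X) [IsProbabilityMeasure m]
    {d : ℕ} (π : X → EuclideanSpace ℝ (Fin d)) (hπ : Measurable π)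
    -- the measurable partition `η = {p⁻¹(z)}`
    (p : X → Z) (hp : Measurable p)
    -- Rohlin's system of conditional measures of `m` given `η`
    (μc : X → Measure X)
    (hprob : ∀ x, IsProbabilityMeasure (μc x))
    (hatom : ∀ x, μc x {y | p y = p x} = 1)
    (hmeas : ∀ A : Set X, MeasurableSet A →
      Measurable[MeasurableSpace.comap p inferInstance] (fun x => μc x A))
    (hdisint : ∀ A : Set X, MeasurableSet A → m A = ∫⁻ x, μc x A ∂m)
    (A : Set X) (hA : MeasurableSet A) :
    ∀ᵐ x ∂m,
      Tendsto (fun r : ℝ =>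
          (μc x (π ⁻¹' closedBall (π x) r ∩ A)).toReal
            / (μc x (π ⁻¹' closedBall (π x) r)).toReal)
        (𝓝[>] (0 : ℝ))
        (𝓝 ((m[Set.indicator A (fun _ => (1 : ℝ)) |
            MeasurableSpace.comap p inferInstance ⊔ MeasurableSpace.comap π inferInstance]) x)) := by
  classical
  have hJle : (MeasurableSpace.comap p inferInstance ⊔ MeasurableSpace.comap π inferInstance
      : MeasurableSpace X) ≤ ‹MeasurableSpace X› :=
    sup_le (measurable_iff_comap_le.1 hp) (measurable_iff_comap_le.1 hπ)
  have hle_p : (MeasurableSpace.comap p inferInstance : MeasurableSpace X)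
      ≤ MeasurableSpace.comap p inferInstance ⊔ MeasurableSpace.comap π inferInstance :=
    le_sup_left
  have hle_pi : (MeasurableSpace.comap π inferInstance : MeasurableSpace X)
      ≤ MeasurableSpace.comap p inferInstance ⊔ MeasurableSpace.comap π inferInstance :=
    le_sup_right
  have hπJ : Measurable[(MeasurableSpace.comap p inferInstance ⊔ MeasurableSpace.comap π inferInstance)] π := measurable_iff_comap_le.2 hle_pi
  -- constancy of conditional measures on fibers
  have hconst : ∀ x y, p y = p x → μc y = μc x := by
    intro x y hxy
    refine Measure.ext (fun s hs => ?_)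
    exact comap_meas_eq_aux (hmeas s hs) hxy
  -- measurability of the kernel
  have hμcJ : @Measurable X (Measure X) (MeasurableSpace.comap p inferInstance ⊔ MeasurableSpace.comap π inferInstance) _ μc := by
    refine @Measure.measurable_of_measurable_coe X X ‹MeasurableSpace X› (MeasurableSpace.comap p inferInstance ⊔ MeasurableSpace.comap π inferInstance) μc (fun s hs => ?_)
    exact (hmeas s hs).mono hle_p le_rfl
  have hμcM : Measurable μc := hμcJ.mono hJle le_rfl
  -- measurability of the basic quantities
  have hBmeasJ : ∀ (B : Set X), MeasurableSet B → ∀ q : ℝ,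
      Measurable[(MeasurableSpace.comap p inferInstance ⊔ MeasurableSpace.comap π inferInstance)] (fun x => μc x (π ⁻¹' closedBall (π x) q ∩ B)) := by
    intro B hB q
    haveI hmk : IsMarkovKernel (@Kernel.mk X X
        (MeasurableSpace.comap p inferInstance ⊔ MeasurableSpace.comap π inferInstance)
        ‹MeasurableSpace X› μc hμcJ) := by
      constructor
      intro a
      rw [Kernel.coe_mk]
      exact hprob a
    have h := @kernel_ball_meas_aux X X (EuclideanSpace ℝ (Fin d))
      (MeasurableSpace.comap p inferInstance ⊔ MeasurableSpace.comap π inferInstance)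
      ‹MeasurableSpace X› _ _ _ _
      (@Kernel.mk X X
        (MeasurableSpace.comap p inferInstance ⊔ MeasurableSpace.comap π inferInstance)
        ‹MeasurableSpace X› μc hμcJ)
      (by infer_instance) π hπ π hπJ B hB q
    simp only [Kernel.coe_mk] at h
    exact h
  have hdenJ : ∀ q : ℝ, Measurable[(MeasurableSpace.comap p inferInstance ⊔ MeasurableSpace.comap π inferInstance)] (fun x => μc x (π ⁻¹' closedBall (π x) q)) := by
    intro q
    have := hBmeasJ univ MeasurableSet.univ q
    simpa [Set.inter_univ] using this
  -- the approximating ratios and candidate limit function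
  set G : X → ℕ → ℝ≥0∞ := fun x n =>
    μc x (π ⁻¹' closedBall (π x) (1 / ((n : ℝ) + 1)) ∩ A)
      / μc x (π ⁻¹' closedBall (π x) (1 / ((n : ℝ) + 1))) with hGdef
  set F : X → ℝ≥0∞ := fun x => Filter.limsup (G x) Filter.atTop with hFdef
  set f : X → ℝ := fun x => (F x).toReal with hfdef
  set gg : X → ℝ → ℝ := fun x r =>
    (μc x (π ⁻¹' closedBall (π x) r ∩ A)).toReal
      / (μc x (π ⁻¹' closedBall (π x) r)).toReal with hggdef
  have hGleone : ∀ x n, G x n ≤ 1 := by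
    intro x n
    refine ENNReal.div_le_of_le_mul ?_
    rw [one_mul]
    exact measure_mono Set.inter_subset_left
  have hFleone : ∀ x, F x ≤ 1 := by
    intro x
    refine Filter.limsup_le_of_le (by isBoundedDefault) ?_
    exact Filter.Eventually.of_forall (hGleone x)
  have hGJ : ∀ n, Measurable[(MeasurableSpace.comap p inferInstance ⊔ MeasurableSpace.comap π inferInstance)] (fun x => G x n) := by
    intro n
    exact (hBmeasJ A hA _).div (hdenJ _)
  have hFJ : Measurable[(MeasurableSpace.comap p inferInstance ⊔ MeasurableSpace.comap π inferInstance)] F := by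
    rw [hFdef]
    simp only [Filter.limsup_eq_iInf_iSup_of_nat]
    exact Measurable.iInf (fun n => Measurable.iSup (fun i => Measurable.iSup
      (fun _ => hGJ i)))
  have hfJ : Measurable[(MeasurableSpace.comap p inferInstance ⊔ MeasurableSpace.comap π inferInstance)] f := hFJ.ennreal_toReal
  have hfM : Measurable f := hfJ.mono hJle le_rfl
  have hggM : ∀ q : ℝ, Measurable (fun x => gg x q) := by
    intro q
    exact (((hBmeasJ A hA q).mono hJle le_rfl).ennreal_toReal).div
      (((hdenJ q).mono hJle le_rfl).ennreal_toReal)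
  -- the sequence of radii
  have hseq : Tendsto (fun n : ℕ => 1 / ((n : ℝ) + 1)) atTop (𝓝[>] (0 : ℝ)) := by
    refine tendsto_nhdsWithin_of_tendsto_nhds_of_eventually_within _
      tendsto_one_div_add_atTop_nhds_zero_nat ?_
    exact Filter.Eventually.of_forall (fun n => Set.mem_Ioi.2 (by positivity))
  -- the key pointwise fact from Besicovitch differentiation on fibers
  have key : ∀ x : X, ∀ᵐ y ∂(μc x),
      Tendsto (gg y) (𝓝[>] (0 : ℝ)) (𝓝 (f y))
      ∧ F y = ((((μc x).restrict A).map π).rnDeriv ((μc x).map π)) (π y) := by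
    intro x
    haveI := hprob x
    have hbes := fiber_besicovitch_aux π hπ (μc x) A hA
    have hfib : ∀ᵐ y ∂(μc x), p y = p x := by
      have hms : MeasurableSet {y | p y = p x} := hp (measurableSet_singleton (p x))
      have hc : μc x {y | p y = p x}ᶜ = 0 := by
        rw [measure_compl hms (measure_ne_top _ _), hatom x, measure_univ]
        simp
      rw [ae_iff]
      exact hc
    filter_upwards [hbes, hfib] with y hy hpy
    have hνy : μc y = μc x := hconst x y hpy
    have hGy : G y = fun n : ℕ =>
        μc x (π ⁻¹' closedBall (π y) (1 / ((n : ℝ) + 1)) ∩ A)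
          / μc x (π ⁻¹' closedBall (π y) (1 / ((n : ℝ) + 1))) := by
      funext n
      rw [hGdef]
      simp only [hνy]
    have hFy : F y = ((((μc x).restrict A).map π).rnDeriv ((μc x).map π)) (π y) := by
      rw [hFdef]
      simp only
      rw [hGy]
      exact (hy.1.comp hseq).limsup_eq
    refine ⟨?_, hFy⟩
    have h2 : Tendsto (fun r : ℝ =>
        (μc x (π ⁻¹' closedBall (π y) r ∩ A) / μc x (π ⁻¹' closedBall (π y) r)).toReal)
        (𝓝[>] (0 : ℝ))
        (𝓝 (((((μc x).restrict A).map π).rnDeriv ((μc x).map π)) (π y)).toReal) :=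
      (ENNReal.tendsto_toReal hy.2).comp hy.1
    have hfγ : f y = (((((μc x).restrict A).map π).rnDeriv ((μc x).map π)) (π y)).toReal := by
      rw [hfdef]; simp only; rw [hFy]
    rw [hggdef]
    simp only [hνy, hfγ]
    refine h2.congr (fun r => ?_)
    rw [ENNReal.toReal_div]
  -- the rational good set
  set Gd : Set X := ⋂ (ε : ℚ) (_ : 0 < ε), ⋃ (δ : ℚ) (_ : 0 < δ),
      ⋂ (q : ℚ) (_ : 0 < q) (_ : (q : ℝ) < (δ : ℝ)),
        {x : X | |gg x (q : ℝ) - f x| ≤ (ε : ℝ)} with hGddef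
  have hGdmeas : MeasurableSet Gd := by
    refine MeasurableSet.iInter (fun ε => MeasurableSet.iInter (fun _ =>
      MeasurableSet.iUnion (fun δ => MeasurableSet.iUnion (fun _ =>
      MeasurableSet.iInter (fun q => MeasurableSet.iInter (fun _ =>
      MeasurableSet.iInter (fun _ => ?_)))))))
    exact measurableSet_le (((hggM (q : ℝ)).sub hfM).abs) measurable_const
  have hC1 : ∀ x, Tendsto (gg x) (𝓝[>] (0 : ℝ)) (𝓝 (f x)) → x ∈ Gd := by
    intro x hx
    rw [hGddef]
    simp only [Set.mem_iInter, Set.mem_iUnion, Set.mem_setOf_eq]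
    intro ε hε
    rw [Metric.tendsto_nhdsWithin_nhds] at hx
    obtain ⟨δ, hδ0, h⟩ := hx (ε : ℝ) (by exact_mod_cast hε)
    obtain ⟨δ', hδ'0, hδ'δ⟩ := exists_rat_btwn hδ0
    refine ⟨δ', by exact_mod_cast hδ'0, fun q hq hqδ' => ?_⟩
    have hq0 : (0 : ℝ) < (q : ℝ) := by exact_mod_cast hq
    have hd := h (Set.mem_Ioi.2 hq0)
      (by rw [Real.dist_eq, sub_zero, abs_of_pos hq0]; exact hqδ'.trans hδ'δ)
    rw [Real.dist_eq] at hd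
    exact hd.le
  have hC2 : ∀ x, x ∈ Gd → Tendsto (gg x) (𝓝[>] (0 : ℝ)) (𝓝 (f x)) := by
    intro x hx
    by_cases hD : ∃ r : ℝ, 0 < r ∧ μc x (π ⁻¹' closedBall (π x) r) = 0
    · -- degenerate case : everything is eventually zero
      obtain ⟨r₀, hr₀, h0⟩ := hD
      have hden : ∀ r : ℝ, r ≤ r₀ → μc x (π ⁻¹' closedBall (π x) r) = 0 := fun r hr =>
        measure_mono_null (Set.preimage_mono (closedBall_subset_closedBall hr)) h0
      have hfx : f x = 0 := by
        have hG0 : ∀ᶠ n in atTop, G x n = 0 := by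
          have hev : ∀ᶠ n : ℕ in atTop, 1 / ((n : ℝ) + 1) < r₀ :=
            tendsto_one_div_add_atTop_nhds_zero_nat.eventually (gt_mem_nhds hr₀)
          filter_upwards [hev] with n hn
          rw [hGdef]
          simp only
          have hden0 := hden _ hn.le
          have hnum0 : μc x (π ⁻¹' closedBall (π x) (1 / ((n : ℝ) + 1)) ∩ A) = 0 :=
            measure_mono_null Set.inter_subset_left hden0
          rw [hnum0, ENNReal.zero_div]
        have : F x = 0 := by
          rw [hFdef]
          simp only
          rw [Filter.limsup_congr hG0]
          simp
        rw [hfdef]; simp only; rw [this]; simp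
      rw [hfx]
      have hev : ∀ᶠ r in 𝓝[>] (0 : ℝ), gg x r = 0 := by
        filter_upwards [Ioo_mem_nhdsGT_of_mem (Set.left_mem_Ico.2 hr₀)] with r hr
        rw [hggdef]
        simp only
        rw [hden r hr.2.le]
        simp
      exact tendsto_const_nhds.congr' (hev.mono fun r h => h.symm)
    · push_neg at hD
      rw [Metric.tendsto_nhdsWithin_nhds]
      intro ε hε
      obtain ⟨ε', hε'0, hε'ε⟩ := exists_rat_btwn hε
      have hε'0' : (0 : ℚ) < ε' := by exact_mod_cast hε'0
      rw [hGddef] at hx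
      simp only [Set.mem_iInter, Set.mem_iUnion, Set.mem_setOf_eq] at hx
      obtain ⟨δ, hδ0, hδ⟩ := hx ε' hε'0'
      have hδ0' : (0 : ℝ) < (δ : ℝ) := by exact_mod_cast hδ0
      refine ⟨(δ : ℝ), hδ0', ?_⟩
      intro r hr hrd
      have hr0 : (0 : ℝ) < r := hr
      have hrδ : r < (δ : ℝ) := by
        rwa [Real.dist_eq, sub_zero, abs_of_pos hr0] at hrd
      -- choose a decreasing rational sequence converging to r from above
      set c : ℝ := (δ : ℝ) - r with hcdef
      have hc0 : 0 < c := by rw [hcdef]; linarith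
      have hex : ∀ k : ℕ, ∃ qq : ℚ, r + c / ((k : ℝ) + 2) < (qq : ℝ)
          ∧ (qq : ℝ) < r + c / ((k : ℝ) + 1) := by
        intro k
        refine exists_rat_btwn ?_
        have : c / ((k : ℝ) + 2) < c / ((k : ℝ) + 1) := by
          apply div_lt_div_of_pos_left hc0 (by positivity) (by linarith)
        linarith
      choose q hq1 hq2 using hex
      have hqr : ∀ k, r < (q k : ℝ) := fun k =>
        lt_trans (lt_add_of_pos_right r (by positivity)) (hq1 k)
      have hqδ : ∀ k, (q k : ℝ) < (δ : ℝ) := by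
        intro k
        have hk1 : (1 : ℝ) ≤ (k : ℝ) + 1 := by
          have := Nat.cast_nonneg (α := ℝ) k
          linarith
        have h1 : c / ((k : ℝ) + 1) ≤ c := div_le_self hc0.le hk1
        have h2 := hq2 k
        have h3 : c = (δ : ℝ) - r := hcdef
        linarith
      have hanti : Antitone (fun k => π ⁻¹' closedBall (π x) ((q k : ℝ))) := by
        refine antitone_nat_of_succ_le (fun k => ?_)
        refine Set.preimage_mono (closedBall_subset_closedBall ?_)
        have h1 := hq2 (k + 1)
        have h2 := hq1 k
        rw [Nat.cast_add, Nat.cast_one] at h1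
        have heq : ((k : ℝ) + 1) + 1 = (k : ℝ) + 2 := by ring
        rw [heq] at h1
        linarith [h1, h2]
      have hqlim : Tendsto (fun k : ℕ => (q k : ℝ)) atTop (𝓝 r) := by
        have hupper : Tendsto (fun k : ℕ => r + c * (1 / ((k : ℝ) + 1))) atTop (𝓝 r) := by
          have := tendsto_one_div_add_atTop_nhds_zero_nat.const_mul c
          simpa using tendsto_const_nhds.add this
        refine tendsto_of_tendsto_of_tendsto_of_le_of_le tendsto_const_nhds hupper
          (fun k => (hqr k).le) (fun k => ?_)
        have := hq2 k
        rw [mul_one_div]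
        linarith
      have hiInter : (⋂ k, π ⁻¹' closedBall (π x) ((q k : ℝ)))
          = π ⁻¹' closedBall (π x) r := by
        ext y
        simp only [Set.mem_iInter, Set.mem_preimage, Metric.mem_closedBall]
        constructor
        · intro h
          exact ge_of_tendsto' hqlim (fun k => h k)
        · intro h k
          exact h.trans (hqr k).le
      have hdenT : Tendsto (fun k => μc x (π ⁻¹' closedBall (π x) ((q k : ℝ)))) atTop
          (𝓝 (μc x (π ⁻¹' closedBall (π x) r))) := by
        have := tendsto_measure_iInter_atTop (μ := μc x)
          (fun k => (hπ measurableSet_closedBall).nullMeasurableSet) hanti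
          ⟨0, measure_ne_top _ _⟩
        rw [hiInter] at this
        exact this
      have hnumT : Tendsto (fun k => μc x (π ⁻¹' closedBall (π x) ((q k : ℝ)) ∩ A)) atTop
          (𝓝 (μc x (π ⁻¹' closedBall (π x) r ∩ A))) := by
        have hanti' : Antitone (fun k => π ⁻¹' closedBall (π x) ((q k : ℝ)) ∩ A) :=
          fun i j hij => Set.inter_subset_inter_left A (hanti hij)
        have := tendsto_measure_iInter_atTop (μ := μc x)
          (fun k => ((hπ measurableSet_closedBall).inter hA).nullMeasurableSet) hanti'
          ⟨0, measure_ne_top _ _⟩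
        have hI : (⋂ k, π ⁻¹' closedBall (π x) ((q k : ℝ)) ∩ A)
            = π ⁻¹' closedBall (π x) r ∩ A := by
          rw [← Set.iInter_inter, hiInter]
        rw [hI] at this
        exact this
      have hggT : Tendsto (fun k => gg x ((q k : ℝ))) atTop (𝓝 (gg x r)) := by
        rw [hggdef]
        simp only
        refine Tendsto.div ?_ ?_ ?_
        · exact (ENNReal.tendsto_toReal (measure_ne_top _ _)).comp hnumT
        · exact (ENNReal.tendsto_toReal (measure_ne_top _ _)).comp hdenT
        · exact ENNReal.toReal_ne_zero.2 ⟨hD r hr0, measure_ne_top _ _⟩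
      have hbound : |gg x r - f x| ≤ (ε' : ℝ) := by
        have hTb : Tendsto (fun k => |gg x ((q k : ℝ)) - f x|) atTop (𝓝 (|gg x r - f x|)) :=
          ((hggT.sub tendsto_const_nhds).abs)
        refine le_of_tendsto hTb (Filter.Eventually.of_forall (fun k => ?_))
        have hqk0 : (0 : ℚ) < q k := by
          have : (0 : ℝ) < (q k : ℝ) := lt_trans hr0 (hqr k)
          exact_mod_cast this
        exact hδ (q k) hqk0 (hqδ k)
      rw [Real.dist_eq]
      exact lt_of_le_of_lt hbound hε'ε
  -- almost every point is in Gd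
  have hGdc : ∀ x : X, μc x Gdᶜ = 0 := by
    intro x
    have h1 : ∀ᵐ y ∂(μc x), y ∈ Gd := (key x).mono fun y hy => hC1 y hy.1
    rw [ae_iff] at h1
    exact h1
  have hmGdc : m Gdᶜ = 0 := by
    rw [hdisint _ hGdmeas.compl]
    simp [hGdc]
  have hmain1 : ∀ᵐ x ∂m, Tendsto (gg x) (𝓝[>] (0 : ℝ)) (𝓝 (f x)) := by
    have hGdae : ∀ᵐ x ∂m, x ∈ Gd := by
      rw [ae_iff]
      exact hmGdc
    filter_upwards [hGdae] with x hx using hC2 x hx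
  -- conditional-expectation identification
  have hFM : Measurable F := hFJ.mono hJle le_rfl
  have hmbind : m.bind μc = m := by
    refine Measure.ext (fun s hs => ?_)
    rw [Measure.bind_apply hs hμcM.aemeasurable, ← hdisint s hs]
  have hbind : ∀ g : X → ℝ≥0∞, Measurable g →
      ∫⁻ y, g y ∂m = ∫⁻ x, ∫⁻ y, g y ∂(μc x) ∂m := by
    intro g hg
    conv_lhs => rw [← hmbind]
    exact Measure.lintegral_bind hμcM.aemeasurable hg.aemeasurable
  have hfibint : ∀ x, ∀ T : Set (EuclideanSpace ℝ (Fin d)), MeasurableSet T →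
      ∫⁻ y in π ⁻¹' T, F y ∂(μc x) = μc x (π ⁻¹' T ∩ A) := by
    intro x T hT
    haveI := hprob x
    exact fiber_lintegral_aux π hπ (μc x) A hA F ((key x).mono (fun y hy => hy.2)) T hT
  have hCint : ∀ S : Set Z, ∀ T : Set (EuclideanSpace ℝ (Fin d)),
      MeasurableSet S → MeasurableSet T →
      ∫⁻ y in p ⁻¹' S ∩ π ⁻¹' T, F y ∂m = m ((p ⁻¹' S ∩ π ⁻¹' T) ∩ A) := by
    intro S T hS hT
    have hsm : MeasurableSet (p ⁻¹' S ∩ π ⁻¹' T) := (hp hS).inter (hπ hT)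
    rw [← lintegral_indicator hsm, hbind _ (hFM.indicator hsm),
      hdisint _ (hsm.inter hA)]
    refine lintegral_congr (fun x => ?_)
    haveI := hprob x
    have hfibms : MeasurableSet {y | p y = p x} := hp (measurableSet_singleton (p x))
    have hfibc : μc x {y | p y = p x}ᶜ = 0 := by
      rw [measure_compl hfibms (measure_ne_top _ _), hatom x, measure_univ]
      simp
    by_cases hxS : p x ∈ S
    · have hsub : {y | p y = p x} ⊆ p ⁻¹' S := fun y hy => by
        simp only [Set.mem_preimage]
        rw [Set.mem_setOf_eq] at hy
        rw [hy]
        exact hxS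
      have hnull : μc x (p ⁻¹' S)ᶜ = 0 :=
        measure_mono_null (Set.compl_subset_compl.2 hsub) hfibc
      have hae1 : ∀ᵐ y ∂(μc x), y ∈ p ⁻¹' S := by
        rw [ae_iff]
        exact hnull
      have h1 : ∫⁻ y, (p ⁻¹' S ∩ π ⁻¹' T).indicator F y ∂(μc x)
          = ∫⁻ y, (π ⁻¹' T).indicator F y ∂(μc x) := by
        refine lintegral_congr_ae ?_
        filter_upwards [hae1] with y hy
        by_cases hyT : y ∈ π ⁻¹' T
        · rw [Set.indicator_of_mem (Set.mem_inter hy hyT), Set.indicator_of_mem hyT]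
        · rw [Set.indicator_of_notMem (fun hc => hyT hc.2), Set.indicator_of_notMem hyT]
      rw [h1, lintegral_indicator (hπ hT), hfibint x T hT]
      have h2 : (p ⁻¹' S ∩ π ⁻¹' T) ∩ A = (π ⁻¹' T ∩ A) ∩ p ⁻¹' S := by
        ext y
        constructor
        · rintro ⟨⟨ha, hb⟩, hc⟩
          exact ⟨⟨hb, hc⟩, ha⟩
        · rintro ⟨⟨hb, hc⟩, ha⟩
          exact ⟨⟨ha, hb⟩, hc⟩
      rw [h2, measure_inter_conull hnull]
    · have hsub : p ⁻¹' S ⊆ {y | p y = p x}ᶜ := by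
        intro y hy hyc
        rw [Set.mem_setOf_eq] at hyc
        exact hxS (by rw [← hyc]; exact hy)
      have h0 : μc x (p ⁻¹' S) = 0 := measure_mono_null hsub hfibc
      have hL : ∫⁻ y, (p ⁻¹' S ∩ π ⁻¹' T).indicator F y ∂(μc x) = 0 := by
        rw [lintegral_indicator hsm]
        exact setLIntegral_measure_zero _ _ (measure_mono_null Set.inter_subset_left h0)
      have hR : μc x ((p ⁻¹' S ∩ π ⁻¹' T) ∩ A) = 0 :=
        measure_mono_null (Set.inter_subset_left.trans Set.inter_subset_left) h0
      rw [hL, hR]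
  -- the generating π-system
  set C : Set (Set X) := {s : Set X | ∃ S : Set Z, ∃ T : Set (EuclideanSpace ℝ (Fin d)),
      MeasurableSet S ∧ MeasurableSet T ∧ s = p ⁻¹' S ∩ π ⁻¹' T} with hCdef
  have hmemJ : ∀ s ∈ C, MeasurableSet[(MeasurableSpace.comap p inferInstance ⊔ MeasurableSpace.comap π inferInstance)] s := by
    rintro s ⟨S, T, hS, hT, rfl⟩
    exact @MeasurableSet.inter X (MeasurableSpace.comap p inferInstance ⊔ MeasurableSpace.comap π inferInstance) _ _
      (hle_p _ ⟨S, hS, rfl⟩) (hle_pi _ ⟨T, hT, rfl⟩)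
  have hpiC : IsPiSystem C := by
    rintro s ⟨S1, T1, hS1, hT1, rfl⟩ t ⟨S2, T2, hS2, hT2, rfl⟩ -
    refine ⟨S1 ∩ S2, T1 ∩ T2, hS1.inter hS2, hT1.inter hT2, ?_⟩
    ext y
    simp only [Set.mem_inter_iff, Set.mem_preimage, Set.mem_inter_iff]
    tauto
  have hgen : ((MeasurableSpace.comap p inferInstance ⊔ MeasurableSpace.comap π inferInstance) : MeasurableSpace X) = MeasurableSpace.generateFrom C := by
    refine le_antisymm (sup_le ?_ ?_) (MeasurableSpace.generateFrom_le hmemJ)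
    · intro s hs
      obtain ⟨S, hS, rfl⟩ := hs
      exact MeasurableSpace.measurableSet_generateFrom
        ⟨S, Set.univ, hS, MeasurableSet.univ, by simp⟩
    · intro s hs
      obtain ⟨T, hT, rfl⟩ := hs
      exact MeasurableSpace.measurableSet_generateFrom
        ⟨Set.univ, T, MeasurableSet.univ, hT, by simp⟩
  have hFlttop : ∀ᵐ y ∂m, F y < ∞ :=
    ae_of_all _ (fun y => lt_of_le_of_lt (hFleone y) ENNReal.one_lt_top)
  haveI hfinwd : IsFiniteMeasure (m.withDensity F) := by
    constructor
    rw [withDensity_apply F MeasurableSet.univ, Measure.restrict_univ]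
    calc ∫⁻ y, F y ∂m ≤ ∫⁻ _, 1 ∂m := lintegral_mono hFleone
      _ = 1 := by simp
      _ < ∞ := ENNReal.one_lt_top
  have hCeq : ∀ s ∈ C, (m.withDensity F) s = (m.restrict A) s := by
    rintro s ⟨S, T, hS, hT, rfl⟩
    rw [withDensity_apply F ((hp hS).inter (hπ hT)), hCint S T hS hT,
      Measure.restrict_apply' hA]
  have hunivC : Set.univ ∈ C :=
    ⟨Set.univ, Set.univ, MeasurableSet.univ, MeasurableSet.univ, by simp⟩
  have hext : (m.withDensity F).trim hJle = (m.restrict A).trim hJle := by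
    haveI hfin1 : IsFiniteMeasure ((m.withDensity F).trim hJle) := isFiniteMeasure_trim hJle
    refine @ext_of_generate_finite X (MeasurableSpace.comap p inferInstance ⊔ MeasurableSpace.comap π inferInstance)
      ((m.withDensity F).trim hJle) ((m.restrict A).trim hJle)
      C hgen hpiC hfin1 (fun s hs => ?_) ?_
    · rw [trim_measurableSet_eq hJle (hmemJ s hs), trim_measurableSet_eq hJle (hmemJ s hs)]
      exact hCeq s hs
    · rw [trim_measurableSet_eq hJle MeasurableSet.univ,
        trim_measurableSet_eq hJle MeasurableSet.univ]
      exact hCeq Set.univ hunivC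
  have htrim : ∀ s : Set X, MeasurableSet[(MeasurableSpace.comap p inferInstance ⊔ MeasurableSpace.comap π inferInstance)] s →
      ∫⁻ y in s, F y ∂m = m (s ∩ A) := by
    intro s hs
    have h1 : (m.withDensity F) s = (m.restrict A) s := by
      rw [← trim_measurableSet_eq hJle hs, ← trim_measurableSet_eq hJle hs, hext]
    rw [← withDensity_apply F (hJle s hs), h1, Measure.restrict_apply' hA]
  haveI hsf : SigmaFinite (m.trim hJle) := by
    haveI : IsFiniteMeasure (m.trim hJle) := isFiniteMeasure_trim hJle
    infer_instance
  have hf_int : Integrable f m := by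
    refine Integrable.mono' (integrable_const (1 : ℝ)) hfM.aestronglyMeasurable ?_
    refine ae_of_all _ (fun x => ?_)
    rw [Real.norm_eq_abs, abs_of_nonneg ENNReal.toReal_nonneg]
    simpa using ENNReal.toReal_mono ENNReal.one_ne_top (hFleone x)
  have hcond : f =ᵐ[m] (m[Set.indicator A (fun _ => (1 : ℝ)) | (MeasurableSpace.comap p inferInstance ⊔ MeasurableSpace.comap π inferInstance)]) := by
    refine ae_eq_condExp_of_forall_setIntegral_eq hJle
      ((integrable_const (1 : ℝ)).indicator hA) (fun s _ _ => hf_int.integrableOn)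
      (fun s hs _ => ?_) (StronglyMeasurable.aestronglyMeasurable hfJ.stronglyMeasurable)
    have hL : ∫ x in s, f x ∂m = (m (s ∩ A)).toReal := by
      rw [hfdef]
      simp only
      rw [integral_toReal (hFM.aemeasurable.restrict) (ae_restrict_of_ae hFlttop),
        htrim s hs]
    have hR : ∫ x in s, Set.indicator A (fun _ => (1 : ℝ)) x ∂m = (m (s ∩ A)).toReal := by
      rw [integral_indicator hA, setIntegral_const, measureReal_restrict_apply hA,
        smul_eq_mul, mul_one, Set.inter_comm, Measure.real]
    rw [hL, hR]
  filter_upwards [hmain1, hcond] with x h1 h2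
  rw [← h2]
  exact h1
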